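/- Assume ω : ℝ^d → ℝ is C⁴-smooth with |∂^α ω(x)| ≤ C⟨x⟩^{M_ω−|α|} for all |α| ≤ 4 and all x ∈ ℝ^d, that m_ω = M_ω − 1, and that |∇ω(x)| ≥ C|x|^{m_ω} for all x ∈ ℝ^d with |x| ≥ 1. Then for every κ > 0 there exists a constant C(κ) > 0 such that |ω(x)| ≥ C(κ)|x|^{M_ω} for all x ∈ D_κ = {x : |x| ≥ 1, dist(x, Σ₀) ≥ κ|x|}. -/

import Mathlib

open MeasureTheory Real

private lemma grad_inner {d : ℕ} (f : EuclideanSpace ℝ (Fin d) → ℝ)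
    (y u : EuclideanSpace ℝ (Fin d)) :
    (inner ℝ (gradient f y) u : ℝ) = fderiv ℝ f y u :=
  InnerProductSpace.toDual_symm_apply

set_option maxHeartbeats 1600000 in
/-- The key estimate in the proof of Lemma 1.2: on the set `D_κ` (with
`m_ω = M_ω - 1`, so that `m_ω + 2 - M_ω = 1`) one has `|ω(x)| ≥ C(κ)|x|^{M_ω}`.
Here `Σ₀` is encoded as `{x | ω x = 0 ∧ (gradient ω 0 = 0 → x ≠ 0)}`, which
equals `Σ \ {0}` if `0` is a critical point of `ω` and equals `Σ` otherwise. -/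
theorem statement3
    (d : ℕ) (hd : 2 ≤ d)
    (M_ω m_ω : ℝ) (hm : m_ω = M_ω - 1)
    (ω : EuclideanSpace ℝ (Fin d) → ℝ)
    (hω : ContDiff ℝ 4 ω)
    (C_ω : ℝ) (hCω : 0 < C_ω)
    (hA2 : ∀ i : ℕ, i ≤ 4 → ∀ x : EuclideanSpace ℝ (Fin d),
      ‖iteratedFDeriv ℝ i ω x‖ ≤ C_ω * (max 1 ‖x‖) ^ (M_ω - (i : ℝ)))
    (C_g : ℝ) (hCg : 0 < C_g)
    (hA3' : ∀ x : EuclideanSpace ℝ (Fin d), 1 ≤ ‖x‖ →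
      C_g * ‖x‖ ^ m_ω ≤ ‖gradient ω x‖) :
    ∀ κ : ℝ, 0 < κ → ∃ C : ℝ, 0 < C ∧
      ∀ x : EuclideanSpace ℝ (Fin d), 1 ≤ ‖x‖ →
        κ * ‖x‖ ≤ Metric.infDist x {y | ω y = 0 ∧ (gradient ω 0 = 0 → y ≠ 0)} →
        C * ‖x‖ ^ M_ω ≤ |ω x| := by
  intro κ hκ
  set K : ℝ := max ((1/2 : ℝ) ^ (M_ω - 2)) ((3/2 : ℝ) ^ (M_ω - 2)) with hKdef
  have hK : 0 < K := lt_max_of_lt_left (Real.rpow_pos_of_pos (by norm_num) _)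
  set c₁ : ℝ := C_ω * K with hc₁def
  have hc₁ : 0 < c₁ := mul_pos hCω hK
  set δ : ℝ := min (κ/2) (min (C_g/(2*c₁)) (1/2)) with hδdef
  have hδ : 0 < δ := lt_min (by positivity) (lt_min (by positivity) (by norm_num))
  have hδκ : δ ≤ κ/2 := min_le_left _ _
  have hδg : δ ≤ C_g/(2*c₁) := (min_le_right _ _).trans (min_le_left _ _)
  have hδh : δ ≤ 1/2 := (min_le_right _ _).trans (min_le_right _ _)
  refine ⟨C_g * δ / 2, by positivity, ?_⟩
  intro x hR hdist
  by_contra hcon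
  push_neg at hcon
  set R := ‖x‖ with hRdef
  have hR0 : (0:ℝ) < R := lt_of_lt_of_le one_pos hR
  set G := gradient ω x with hGdef
  have hGlow : C_g * R ^ (M_ω - 1) ≤ ‖G‖ := by
    have h := hA3' x hR; rwa [hm] at h
  have hGpos : 0 < ‖G‖ :=
    lt_of_lt_of_le (by positivity) hGlow
  set ε : ℝ := if 0 ≤ ω x then 1 else -1 with hεdef
  have hε : ε = 1 ∨ ε = -1 := by
    rw [hεdef]; split <;> simp
  have hεsq : ε * ε = 1 := by rcases hε with h | h <;> rw [h] <;> norm_num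
  have hεabs : |ε| = 1 := by rcases hε with h | h <;> rw [h] <;> norm_num
  have hεω : ε * ω x = |ω x| := by
    rw [hεdef]; split
    · rw [abs_of_nonneg ‹_›]; ring
    · rw [abs_of_neg (lt_of_not_ge ‹_›)]; ring
  set v := (-(ε / ‖G‖)) • G with hvdef
  have hv : ‖v‖ = 1 := by
    rw [hvdef, norm_smul, Real.norm_eq_abs, abs_neg, abs_div, hεabs, abs_of_pos hGpos]
    field_simp
  set T := δ * R with hTdef
  have hT0 : 0 < T := mul_pos hδ hR0
  have hTR : T ≤ R/2 := by
    have := mul_le_mul_of_nonneg_right hδh hR0.le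
    calc T ≤ (1/2)*R := this
    _ = R/2 := by ring
  -- Hessian bound on the ball
  have hHess : ∀ y ∈ Metric.closedBall x T, ‖fderiv ℝ (fderiv ℝ ω) y‖ ≤ c₁ * R ^ (M_ω - 2) := by
    intro y hy
    have hyd : ‖y - x‖ ≤ T := by
      rw [← dist_eq_norm]; exact Metric.mem_closedBall.1 hy
    have hy1 : ‖y‖ ≤ 3/2 * R := by
      have h1 : ‖y‖ ≤ ‖x‖ + ‖y - x‖ := by
        have := norm_add_le x (y - x); simpa using this
      linarith
    have hy2 : R/2 ≤ ‖y‖ := by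
      have h1 : ‖x‖ - ‖y‖ ≤ ‖x - y‖ := norm_sub_norm_le x y
      rw [norm_sub_rev] at h1
      linarith
    set a : ℝ := max 1 ‖y‖ with hadef
    have ha1 : R/2 ≤ a := le_trans hy2 (le_max_right _ _)
    have ha2 : a ≤ 3/2 * R := by
      apply max_le (by linarith) hy1
    have ha0 : 0 < a := lt_of_lt_of_le (by linarith) ha1
    have hbound : a ^ (M_ω - 2) ≤ K * R ^ (M_ω - 2) := by
      have hab : a = (a/R) * R := by field_simp
      have hb1 : (1:ℝ)/2 ≤ a/R := by
        rw [le_div_iff₀ hR0]; linarith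
      have hb2 : a/R ≤ 3/2 := by
        rw [div_le_iff₀ hR0]; linarith
      have hb0 : (0:ℝ) < a/R := by positivity
      have key : (a/R) ^ (M_ω - 2) ≤ K := by
        rcases le_or_gt 0 (M_ω - 2) with he | he
        · exact le_trans (Real.rpow_le_rpow hb0.le hb2 he) (le_max_right _ _)
        · exact le_trans (Real.rpow_le_rpow_of_nonpos (by norm_num) hb1 he.le)
            (le_max_left _ _)
      calc a ^ (M_ω - 2) = (a/R) ^ (M_ω - 2) * R ^ (M_ω - 2) := by
            rw [← Real.mul_rpow hb0.le hR0.le, ← hab]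
        _ ≤ K * R ^ (M_ω - 2) :=
            mul_le_mul_of_nonneg_right key (Real.rpow_pos_of_pos hR0 _).le
    have heq : ‖fderiv ℝ (fderiv ℝ ω) y‖ = ‖iteratedFDeriv ℝ 2 ω y‖ := by
      calc ‖fderiv ℝ (fderiv ℝ ω) y‖
          = ‖iteratedFDeriv ℝ 0 (fderiv ℝ (fderiv ℝ ω)) y‖ := (norm_iteratedFDeriv_zero (f := fderiv ℝ (fderiv ℝ ω)) (x := y)).symm
        _ = ‖iteratedFDeriv ℝ 1 (fderiv ℝ ω) y‖ := norm_iteratedFDeriv_fderiv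
        _ = ‖iteratedFDeriv ℝ 2 ω y‖ := norm_iteratedFDeriv_fderiv
    have h2 := hA2 2 (by norm_num) y
    push_cast at h2
    rw [heq]
    calc ‖iteratedFDeriv ℝ 2 ω y‖ ≤ C_ω * a ^ (M_ω - 2) := h2
      _ ≤ C_ω * (K * R ^ (M_ω - 2)) := mul_le_mul_of_nonneg_left hbound hCω.le
      _ = c₁ * R ^ (M_ω - 2) := by rw [hc₁def]; ring
  have hdiff : Differentiable ℝ ω := hω.differentiable (by norm_num)
  have hdiff1 : Differentiable ℝ (fderiv ℝ ω) :=
    (hω.fderiv_right (m := 1) (by norm_num)).differentiable (by norm_num)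
  have hLip : ∀ y ∈ Metric.closedBall x T,
      ‖fderiv ℝ ω y - fderiv ℝ ω x‖ ≤ c₁ * R ^ (M_ω - 2) * ‖y - x‖ :=
    fun y hy => (convex_closedBall x T).norm_image_sub_le_of_norm_fderiv_le
      (fun z _ => hdiff1 z) hHess (Metric.mem_closedBall_self hT0.le) hy
  have hline : ∀ t : ℝ, HasDerivAt (fun s : ℝ => x + s • v) v t := by
    intro t
    simpa using ((hasDerivAt_id t).smul_const v).const_add x
  have hφ' : ∀ t : ℝ, HasDerivAt (fun s : ℝ => ε * ω (x + s • v))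
      (ε * (fderiv ℝ ω (x + t • v) v)) t := by
    intro t
    exact HasDerivAt.const_mul ε
      ((hdiff (x + t • v)).hasFDerivAt.comp_hasDerivAt t (hline t))
  have hmemIcc : ∀ t ∈ Set.Icc (0:ℝ) T, x + t • v ∈ Metric.closedBall x T := by
    intro t ht
    rw [Metric.mem_closedBall, dist_eq_norm]
    have : x + t • v - x = t • v := by abel
    rw [this, norm_smul, hv, Real.norm_eq_abs, abs_of_nonneg ht.1, mul_one]
    exact ht.2
  have hRpow1 : R ^ (M_ω - 2) * R = R ^ (M_ω - 1) := by
    have h := Real.rpow_add hR0 (M_ω - 2) 1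
    rw [Real.rpow_one, show M_ω - 2 + 1 = M_ω - 1 by ring] at h
    linarith
  have hRpow2 : R ^ (M_ω - 1) * R = R ^ M_ω := by
    have h := Real.rpow_add hR0 (M_ω - 1) 1
    rw [Real.rpow_one, show M_ω - 1 + 1 = M_ω by ring] at h
    linarith
  have hder_le : ∀ t ∈ Set.Icc (0:ℝ) T,
      ε * (fderiv ℝ ω (x + t • v) v) ≤ -(‖G‖/2) := by
    intro t ht
    have hmem := hmemIcc t ht
    have h1 : fderiv ℝ ω x v = -(ε * ‖G‖) := by
      rw [← grad_inner, ← hGdef, hvdef, real_inner_smul_right, real_inner_self_eq_norm_sq]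
      field_simp
    have h2 : ε * (fderiv ℝ ω x v) = -‖G‖ := by
      rw [h1, show ε * -(ε * ‖G‖) = -((ε*ε) * ‖G‖) by ring, hεsq, one_mul]
    have h3 : ε * ((fderiv ℝ ω (x + t • v) - fderiv ℝ ω x) v)
        ≤ c₁ * R ^ (M_ω - 2) * T := by
      have hnorm : ‖(fderiv ℝ ω (x + t • v) - fderiv ℝ ω x) v‖
          ≤ ‖fderiv ℝ ω (x + t • v) - fderiv ℝ ω x‖ * ‖v‖ :=
        ContinuousLinearMap.le_opNorm _ _
      have hL := hLip _ hmem
      have hxv : ‖x + t • v - x‖ = t := by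
        have : x + t • v - x = t • v := by abel
        rw [this, norm_smul, hv, Real.norm_eq_abs, abs_of_nonneg ht.1, mul_one]
      calc ε * ((fderiv ℝ ω (x + t • v) - fderiv ℝ ω x) v)
          ≤ |ε * ((fderiv ℝ ω (x + t • v) - fderiv ℝ ω x) v)| := le_abs_self _
        _ = |((fderiv ℝ ω (x + t • v) - fderiv ℝ ω x) v)| := by
            rw [abs_mul, hεabs, one_mul]
        _ ≤ ‖fderiv ℝ ω (x + t • v) - fderiv ℝ ω x‖ * ‖v‖ := hnorm
        _ = ‖fderiv ℝ ω (x + t • v) - fderiv ℝ ω x‖ := by rw [hv, mul_one]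
        _ ≤ c₁ * R ^ (M_ω - 2) * ‖x + t • v - x‖ := hL
        _ = c₁ * R ^ (M_ω - 2) * t := by rw [hxv]
        _ ≤ c₁ * R ^ (M_ω - 2) * T := by
            apply mul_le_mul_of_nonneg_left ht.2
            positivity
    have h4 : c₁ * R ^ (M_ω - 2) * T ≤ ‖G‖ / 2 := by
      have hc : c₁ * δ ≤ C_g / 2 := by
        have hne : c₁ ≠ 0 := hc₁.ne'
        have h2 : c₁ * (C_g/(2*c₁)) = C_g/2 := by field_simp
        have h := mul_le_mul_of_nonneg_left hδg hc₁.le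
        linarith
      calc c₁ * R ^ (M_ω - 2) * T = (c₁ * δ) * (R ^ (M_ω - 2) * R) := by
            rw [hTdef]; ring
        _ = (c₁ * δ) * R ^ (M_ω - 1) := by rw [hRpow1]
        _ ≤ (C_g/2) * R ^ (M_ω - 1) :=
            mul_le_mul_of_nonneg_right hc (Real.rpow_pos_of_pos hR0 _).le
        _ ≤ ‖G‖/2 := by linarith
    have hsplit : ε * (fderiv ℝ ω (x + t • v) v)
        = ε * (fderiv ℝ ω x v) + ε * ((fderiv ℝ ω (x + t • v) - fderiv ℝ ω x) v) := by
      rw [ContinuousLinearMap.sub_apply]; ring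
    rw [hsplit, h2]
    linarith
  have hcont : ContinuousOn (fun t : ℝ => ε * ω (x + t • v)) (Set.Icc 0 T) :=
    fun t _ => ((hφ' t).continuousAt).continuousWithinAt
  have hdiffOn : DifferentiableOn ℝ (fun t : ℝ => ε * ω (x + t • v))
      (interior (Set.Icc (0:ℝ) T)) :=
    fun t _ => ((hφ' t).differentiableAt).differentiableWithinAt
  have hMVT : ε * ω (x + T • v) - ε * ω (x + (0:ℝ) • v) ≤ (-(‖G‖/2)) * (T - 0) := by
    exact (convex_Icc 0 T).image_sub_le_mul_sub_of_deriv_le hcont hdiffOn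
      (fun t ht => by
        rw [(hφ' t).deriv]
        exact hder_le t (interior_subset ht))
      0 (Set.left_mem_Icc.2 hT0.le) T (Set.right_mem_Icc.2 hT0.le) hT0.le
  have hφ0 : ε * ω (x + (0:ℝ) • v) = |ω x| := by
    rw [zero_smul, add_zero, hεω]
  have hGT : C_g * δ / 2 * R ^ M_ω ≤ ‖G‖/2 * T := by
    calc C_g * δ / 2 * R ^ M_ω = (C_g * R ^ (M_ω - 1))/2 * (δ * R) := by
          rw [← hRpow2]; ring
      _ ≤ ‖G‖/2 * (δ * R) := by
          apply mul_le_mul_of_nonneg_right _ (by positivity)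
          linarith
      _ = ‖G‖/2 * T := by rw [hTdef]
  have hφT : ε * ω (x + T • v) < 0 := by
    have : ε * ω (x + T • v) ≤ |ω x| - ‖G‖/2 * T := by
      rw [← hφ0]; linarith
    have h5 : |ω x| < C_g * δ / 2 * R ^ M_ω := hcon
    linarith
  -- intermediate value theorem
  have hzero : ∃ t ∈ Set.Icc (0:ℝ) T, ε * ω (x + t • v) = 0 := by
    have hmem0 : (0:ℝ) ∈ Set.Icc (ε * ω (x + T • v)) (ε * ω (x + (0:ℝ) • v)) := by
      constructor
      · exact hφT.le
      · rw [hφ0]; exact abs_nonneg _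
    obtain ⟨t, ht, hft⟩ := intermediate_value_Icc' hT0.le hcont hmem0
    exact ⟨t, ht, hft⟩
  obtain ⟨t, ht, hft⟩ := hzero
  have hεne : ε ≠ 0 := by rcases hε with h | h <;> rw [h] <;> norm_num
  have hωz : ω (x + t • v) = 0 := by
    rcases mul_eq_zero.1 hft with h | h
    · exact absurd h hεne
    · exact h
  set z := x + t • v with hzdef
  have hxz : ‖x - z‖ = t := by
    have : x - z = -(t • v) := by rw [hzdef]; abel
    rw [this, norm_neg, norm_smul, hv, Real.norm_eq_abs, abs_of_nonneg ht.1, mul_one]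
  have hzne : z ≠ 0 := by
    have h1 : ‖x‖ - ‖z‖ ≤ ‖x - z‖ := norm_sub_norm_le x z
    have h2 : ‖z‖ > 0 := by
      rw [hxz] at h1
      have := ht.2
      have hR4 : R/2 > 0 := by linarith
      linarith
    exact fun h => by rw [h, norm_zero] at h2; exact lt_irrefl 0 h2
  have hzS : z ∈ {y | ω y = 0 ∧ (gradient ω 0 = 0 → y ≠ 0)} := ⟨hωz, fun _ => hzne⟩
  have hinf : Metric.infDist x {y | ω y = 0 ∧ (gradient ω 0 = 0 → y ≠ 0)} ≤ t := by
    have := Metric.infDist_le_dist_of_mem (x := x) hzS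
    rwa [dist_eq_norm, hxz] at this
  have hκR : κ * R ≤ t := le_trans hdist hinf
  have htT : t ≤ T := ht.2
  have : κ * R ≤ δ * R := le_trans hκR htT
  have hcontra : δ * R < κ * R := by
    have : δ < κ := lt_of_le_of_lt hδκ (by linarith)
    exact mul_lt_mul_of_pos_right this hR0
  linarith
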